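/- Let C_i(μ) = a_i log μ − b_i(μ−1) and C_j(μ) = a_j log μ − b_j(μ−1) with a_i > b_i > b_j > 0 and a_j > b_j, and suppose the difference curve D(μ) = (a_i − a_j) log μ − (b_i − b_j)(μ−1) is positive somewhere on (1,∞) (i.e., a_i − a_j > b_i − b_j > 0). Then [C_i(μ)]⁺ ≥ [C_j(μ)]⁺ for all μ ∈ [1,∞) if and only if a_j/b_j ≤ a_i/b_i. -/

import Mathlib

lemma exists_log_eq (c : ℝ) (hc : 0 < c) (hc1 : c < 1) :
    ∃ μ : ℝ, 1 < μ ∧ Real.log μ = c * (μ - 1) := by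
  set f : ℝ → ℝ := fun μ => Real.log μ - c * (μ - 1) with hf
  have hμ0 : (1:ℝ) < 1/c := by
    rw [lt_div_iff₀ hc]; linarith
  have h01 : (1:ℝ)/c ≤ 16 / c^2 := by
    rw [div_le_div_iff₀ hc (by positivity)]
    nlinarith
  have hf0 : 0 < f (1/c) := by
    have := Real.log_lt_sub_one_of_pos hc (ne_of_lt hc1)
    have hlog : Real.log (1/c) = - Real.log c := by
      rw [one_div, Real.log_inv]
    simp only [hf, hlog]
    have : c * (1/c - 1) = 1 - c := by field_simp
    rw [this]; linarith
  have hf1 : f (16 / c^2) < 0 := by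
    have h4c : (0:ℝ) < 4 / c := by positivity
    have hlog : Real.log (16 / c^2) = 2 * Real.log (4 / c) := by
      have : (16:ℝ) / c^2 = (4/c)^2 := by ring
      rw [this, Real.log_pow]; push_cast; ring
    have hle : Real.log (4/c) ≤ 4/c - 1 := Real.log_le_sub_one_of_pos h4c
    simp only [hf, hlog]
    have key : 2 * (4/c - 1) < c * (16/c^2 - 1) := by
      have e1 : c * (2 * (4/c - 1)) = 8 - 2*c := by field_simp; ring
      have e2 : c * (c * (16/c^2 - 1)) = 16 - c^2 := by field_simp
      have h : c * (2 * (4/c - 1)) < c * (c * (16/c^2 - 1)) := by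
        rw [e1, e2]; nlinarith
      exact lt_of_mul_lt_mul_left h hc.le
    linarith
  have hcont : ContinuousOn f (Set.Icc (1/c) (16/c^2)) := by
    apply ContinuousOn.sub
    · apply Real.continuousOn_log.mono
      intro x hx
      have : (0:ℝ) < 1/c := by positivity
      simp only [Set.mem_compl_iff, Set.mem_singleton_iff]
      have := hx.1; intro h; rw [h] at this; linarith
    · fun_prop
  have : (0:ℝ) ∈ Set.Icc (f (16/c^2)) (f (1/c)) := ⟨le_of_lt hf1, le_of_lt hf0⟩
  obtain ⟨μ, hμmem, hμval⟩ := intermediate_value_Icc' h01 hcont this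
  refine ⟨μ, lt_of_lt_of_le hμ0 hμmem.1, ?_⟩
  have : Real.log μ - c * (μ - 1) = 0 := hμval
  linarith

/-- With `C_i(μ) = a_i log μ − b_i(μ−1)`, `C_j(μ) = a_j log μ − b_j(μ−1)`,
`a_i > b_i > b_j > 0`, `a_j > b_j`, and the difference curve positive somewhere on
`(1,∞)` (i.e. `a_i − a_j > b_i − b_j > 0`), the curve `C_i` dominates `C_j`
(`[C_i(μ)]⁺ ≥ [C_j(μ)]⁺` for all `μ ≥ 1`) iff `a_j/b_j ≤ a_i/b_i`. -/
theorem stmt8 (ai bi aj bj : ℝ)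
    (hbj : 0 < bj) (hbij : bj < bi) (hbi : bi < ai) (haj : bj < aj)
    (hD : bi - bj < ai - aj) (hDpos : 0 < bi - bj)
    (Ci Cj : ℝ → ℝ)
    (hCi : ∀ μ : ℝ, Ci μ = ai * Real.log μ - bi * (μ - 1))
    (hCj : ∀ μ : ℝ, Cj μ = aj * Real.log μ - bj * (μ - 1)) :
    (∀ μ : ℝ, 1 ≤ μ → max (Cj μ) 0 ≤ max (Ci μ) 0) ↔ aj / bj ≤ ai / bi := by
  have haj0 : 0 < aj := lt_trans hbj haj
  have hbi0 : 0 < bi := lt_trans hbj hbij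
  constructor
  · intro hdom
    by_contra hr
    push_neg at hr
    have hmul : ai * bj < aj * bi := by
      rw [div_lt_div_iff₀ hbi0 hbj] at hr; linarith
    -- set s = bj/aj, r = (bi-bj)/(ai-aj), c midpoint
    set s : ℝ := bj / aj with hs
    set r : ℝ := (bi - bj) / (ai - aj) with hrr
    have haij : (0:ℝ) < ai - aj := lt_trans hDpos hD
    have hs0 : 0 < s := by positivity
    have hsr : s < r := by
      rw [hs, hrr, div_lt_div_iff₀ haj0 haij]
      nlinarith
    have hr1 : r < 1 := by
      rw [hrr, div_lt_one haij]; linarith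
    set c : ℝ := (s + r) / 2 with hcdef
    have hc0 : 0 < c := by positivity
    have hc1 : c < 1 := by
      simp only [hcdef]; linarith
    have hsc : s < c := by simp only [hcdef]; linarith
    have hcr : c < r := by simp only [hcdef]; linarith
    obtain ⟨μ, hμ1, hμeq⟩ := exists_log_eq c hc0 hc1
    have hM : 0 < μ - 1 := by linarith
    have hCjpos : 0 < Cj μ := by
      rw [hCj, hμeq]
      have : aj * c > bj := by
        have := (div_lt_iff₀ haj0).mp (by rw [← hs]; exact hsc)
        linarith
      nlinarith
    have hlt : Ci μ < Cj μ := by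
      rw [hCi, hCj, hμeq]
      have h2 : c * (ai - aj) < bi - bj := (lt_div_iff₀ haij).mp (by rw [← hrr]; exact hcr)
      nlinarith
    have := hdom μ (le_of_lt hμ1)
    have h1 : max (Ci μ) 0 < Cj μ := max_lt hlt hCjpos
    have h2 : Cj μ ≤ max (Cj μ) 0 := le_max_left _ _
    linarith
  · intro hr μ hμ
    have hmul : aj * bi ≤ ai * bj := by
      rw [div_le_div_iff₀ hbj hbi0] at hr; linarith
    have hL : 0 ≤ Real.log μ := Real.log_nonneg hμ
    have hM : 0 ≤ μ - 1 := by linarith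
    apply max_le _ (le_max_right _ _)
    rcases le_or_gt (Cj μ) 0 with h | h
    · exact le_trans h (le_max_right _ _)
    · apply le_trans _ (le_max_left (Ci μ) 0)
      rw [hCi]
      rw [hCj] at h ⊢
      nlinarith [mul_nonneg hM (sub_nonneg.mpr hmul)]
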